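/- Let K = u/v ∈ F(k) be shift-reduced with u, v ∈ F[k] coprime, and let α₁ = deg(u), α₂ = deg(v), β = max{0, deg(v − u)}. Then the standard complement W_K (the complement of im(φ_K) in F[k] spanned by monomials of degrees not attained by im(φ_K)) has F-dimension at most max{α₁, α₂} − [β ≤ α₁ − 1], where [·] is the Iverson bracket. -/

import Mathlib

open Polynomial

section Aux

variable {F : Type*} [Field F] [CharZero F]

private lemma tau_eq_comp (τ : Polynomial F ≃ₐ[F] Polynomial F) (hτ : τ X = X + 1)
    (p : Polynomial F) : τ p = p.comp (X + 1) := by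
  have h : (τ : Polynomial F →ₐ[F] Polynomial F) = aeval (X + 1 : Polynomial F) := by
    apply Polynomial.algHom_ext
    simp [hτ]
  have h2 : τ p = (τ : Polynomial F →ₐ[F] Polynomial F) p := rfl
  rw [h2, h]
  rfl

private lemma natDegree_tau (τ : Polynomial F ≃ₐ[F] Polynomial F) (hτ : τ X = X + 1)
    (p : Polynomial F) : (τ p).natDegree = p.natDegree := by
  rw [tau_eq_comp τ hτ, natDegree_comp]
  have h : ((X : Polynomial F) + 1).natDegree = 1 := by
    simpa using natDegree_X_add_C (1 : F)
  rw [h, mul_one]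

private lemma tau_ne_zero (τ : Polynomial F ≃ₐ[F] Polynomial F) {p : Polynomial F}
    (hp : p ≠ 0) : τ p ≠ 0 := by
  intro h
  exact hp (τ.injective (by rw [h, map_zero]))

private lemma tau_mem_degreeLT (τ : Polynomial F ≃ₐ[F] Polynomial F) (hτ : τ X = X + 1)
    {p : Polynomial F} {n : ℕ} (hp : p ∈ degreeLT F n) : τ p ∈ degreeLT F n := by
  rw [mem_degreeLT] at hp ⊢
  rcases eq_or_ne p 0 with rfl | h0
  · simpa using hp
  · have hτp := tau_ne_zero τ h0
    rw [degree_eq_natDegree hτp, natDegree_tau τ hτ, ← degree_eq_natDegree h0]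
    exact hp

/-- If `p` has degree `< m+1` then `τ p - p` has degree `< m`. -/
private lemma shift_sub_mem (τ : Polynomial F ≃ₐ[F] Polynomial F) (hτ : τ X = X + 1)
    (m : ℕ) {p : Polynomial F} (hp : p ∈ degreeLT F (m + 1)) :
    τ p - p ∈ degreeLT F m := by
  classical
  have hmap : degreeLT F (m + 1) ≤
      Submodule.comap (τ.toLinearMap - LinearMap.id) (degreeLT F m) := by
    rw [degreeLT_eq_span_X_pow, Submodule.span_le]
    intro g hg
    simp only [Finset.coe_image, Set.mem_image, Finset.mem_coe, Finset.mem_range] at hg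
    obtain ⟨j, hj, rfl⟩ := hg
    simp only [SetLike.mem_coe, Submodule.mem_comap, LinearMap.sub_apply,
      AlgEquiv.toLinearMap_apply, LinearMap.id_apply]
    have hτX : τ ((X : Polynomial F) ^ j) = (X + 1) ^ j := by rw [map_pow, hτ]
    rw [mem_degreeLT, hτX]
    rcases Nat.eq_zero_or_pos j with h0 | h1
    · subst h0
      rw [pow_zero, pow_zero, sub_self, degree_zero]
      exact WithBot.bot_lt_coe m
    · have hmon : ((X : Polynomial F) + 1).Monic := by
        simpa using monic_X_add_C (1 : F)
      have hmonj : (((X : Polynomial F) + 1) ^ j).Monic := hmon.pow j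
      have hnd : (((X : Polynomial F) + 1) ^ j).natDegree = j := by
        rw [hmon.natDegree_pow]
        have h : ((X : Polynomial F) + 1).natDegree = 1 := by
          simpa using natDegree_X_add_C (1 : F)
        rw [h, mul_one]
      have hdegj : (((X : Polynomial F) + 1) ^ j).degree = (j : WithBot ℕ) := by
        rw [degree_eq_natDegree hmonj.ne_zero, hnd]
      have hsub : degree (((X : Polynomial F) + 1) ^ j - X ^ j) <
          (((X : Polynomial F) + 1) ^ j).degree :=
        degree_sub_lt (by rw [hdegj, degree_X_pow]) hmonj.ne_zero
          (by rw [hmonj.leadingCoeff, (monic_X_pow (R := F) (n := j)).leadingCoeff])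
      rw [hdegj] at hsub
      have hjm : (j : WithBot ℕ) ≤ (m : WithBot ℕ) := by
        exact_mod_cast Nat.le_of_lt_succ hj
      exact lt_of_lt_of_le hsub hjm
  have := hmap hp
  simpa using this

private lemma mul_mem_degreeLT (w : Polynomial F) {n : ℕ} {p : Polynomial F}
    (hp : p ∈ degreeLT F n) : w * p ∈ degreeLT F (w.natDegree + n) := by
  rw [mem_degreeLT] at hp ⊢
  rcases eq_or_ne p 0 with rfl | hp0
  · rw [mul_zero, degree_zero]
    exact WithBot.bot_lt_coe _
  rcases eq_or_ne w 0 with rfl | hw0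
  · rw [zero_mul, degree_zero]
    exact WithBot.bot_lt_coe _
  have hpn : p.natDegree < n := (natDegree_lt_iff_degree_lt hp0).mpr hp
  rw [degree_mul, degree_eq_natDegree hp0, degree_eq_natDegree hw0]
  exact_mod_cast Nat.add_lt_add_left hpn w.natDegree

/-- The counting lemma: a subspace of `degreeLT n` missing the degrees in `t`
has codimension at least `t.card`. -/
private lemma count_lemma (n : ℕ) (V : Submodule F (Polynomial F)) (hV : V ≤ degreeLT F n)
    (t : Finset ℕ) (htn : ∀ ℓ ∈ t, ℓ < n)
    (hts : ∀ ℓ ∈ t, ∀ p ∈ V, p ≠ 0 → p.degree ≠ (ℓ : WithBot ℕ)) :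
    Module.finrank F V + t.card ≤ n := by
  classical
  haveI : FiniteDimensional F (degreeLT F n) :=
    Module.Finite.equiv (degreeLTEquiv F n).symm
  haveI hVfd : FiniteDimensional F V := Submodule.finiteDimensional_of_le hV
  have hfdlt : Module.finrank F (degreeLT F n) = n := by
    rw [(degreeLTEquiv F n).finrank_eq, Module.finrank_pi, Fintype.card_fin]
  set W : Submodule F (Polynomial F) :=
    Submodule.span F ((fun ℓ => (X : Polynomial F) ^ ℓ) '' ↑t) with hWdef
  have hW : W ≤ degreeLT F n := by
    rw [hWdef, Submodule.span_le]
    rintro g ⟨ℓ, hℓ, rfl⟩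
    rw [SetLike.mem_coe, mem_degreeLT, degree_X_pow]
    exact_mod_cast htn ℓ hℓ
  haveI : FiniteDimensional F W := Submodule.finiteDimensional_of_le hW
  have hWrank : Module.finrank F W = t.card := by
    have hli : LinearIndependent F (fun ℓ : {x // x ∈ t} => (X : Polynomial F) ^ (ℓ : ℕ)) := by
      have hb := (Polynomial.basisMonomials F).linearIndependent
      have h2 := hb.comp (fun ℓ : {x // x ∈ t} => (ℓ : ℕ)) Subtype.val_injective
      have h3 : (⇑(Polynomial.basisMonomials F) ∘ fun ℓ : {x // x ∈ t} => (ℓ : ℕ)) =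
          fun ℓ : {x // x ∈ t} => (X : Polynomial F) ^ (ℓ : ℕ) := by
        funext ℓ
        simp only [Function.comp_apply]
        rw [show (Polynomial.basisMonomials F) (ℓ : ℕ) = monomial (ℓ : ℕ) 1 from
          congrFun (Polynomial.coe_basisMonomials F) _, X_pow_eq_monomial]
      rwa [h3] at h2
    have h4 := finrank_span_eq_card hli
    have h5 : Set.range (fun ℓ : {x // x ∈ t} => (X : Polynomial F) ^ (ℓ : ℕ)) =
        (fun ℓ => (X : Polynomial F) ^ ℓ) '' ↑t := (Set.image_eq_range _ _).symm
    rw [h5] at h4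
    rw [hWdef, h4, Fintype.card_coe]
  have hdisj : V ⊓ W = ⊥ := by
    rw [eq_bot_iff]
    rintro p ⟨hpV, hpW⟩
    rw [Submodule.mem_bot]
    by_contra hp0
    have hcoeff : p.natDegree ∈ t := by
      by_contra hnd
      have hker : W ≤ LinearMap.ker (lcoeff F p.natDegree) := by
        rw [hWdef, Submodule.span_le]
        rintro g ⟨ℓ, hℓ, rfl⟩
        simp only [SetLike.mem_coe, LinearMap.mem_ker, lcoeff_apply, coeff_X_pow]
        rw [if_neg]
        intro h
        exact hnd (h ▸ hℓ)
      have h6 := hker hpW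
      simp only [LinearMap.mem_ker, lcoeff_apply] at h6
      exact (mt leadingCoeff_eq_zero.mp hp0) h6
    exact hts _ hcoeff p hpV hp0 (degree_eq_natDegree hp0)
  have heq := Submodule.finrank_sup_add_finrank_inf_eq V W
  rw [hdisj, finrank_bot] at heq
  have hsup : Module.finrank F ↥(V ⊔ W) ≤ n := by
    have h1 : V ⊔ W ≤ degreeLT F n := sup_le hV hW
    have h2 := Submodule.finrank_mono h1
    rwa [hfdlt] at h2
  omega

private lemma descent (τ : Polynomial F ≃ₐ[F] Polynomial F) (hτ : τ X = X + 1) :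
    ∀ (n : ℕ) (u v p : Polynomial F), u ≠ 0 → v ≠ 0 → 1 ≤ u.natDegree →
      u.natDegree = v.natDegree → (∀ i : ℤ, IsCoprime u ((τ ^ i) v)) →
      p.natDegree ≤ n → u * τ p = v * p → p = 0 := by
  intro n
  induction n using Nat.strong_induction_on with
  | _ n IH =>
    intro u v p hu hv hud huvd hsr hpn heq
    by_contra hp0
    have hcop : IsCoprime u v := by simpa using hsr 0
    have hdvd : u ∣ p := hcop.dvd_of_dvd_mul_left ⟨τ p, heq.symm⟩
    obtain ⟨q, rfl⟩ := hdvd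
    have hq0 : q ≠ 0 := fun h => hp0 (by rw [h, mul_zero])
    have heq2 : τ u * τ q = v * q := by
      apply mul_left_cancel₀ hu
      rw [map_mul] at heq
      linear_combination heq
    have hdeg : q.natDegree < n := by
      have h1 : (u * q).natDegree = u.natDegree + q.natDegree := natDegree_mul hu hq0
      omega
    have hsr2 : ∀ i : ℤ, IsCoprime (τ u) ((τ ^ i) v) := by
      intro i
      have h := (hsr (i - 1)).map (↑τ : Polynomial F →+* Polynomial F)
      have h2 : (↑τ : Polynomial F →+* Polynomial F) u = τ u := rfl
      have h3 : (↑τ : Polynomial F →+* Polynomial F) ((τ ^ (i - 1)) v) = (τ ^ i) v := by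
        show τ ((τ ^ (i - 1)) v) = (τ ^ i) v
        have h4 : (τ ^ i) = τ * τ ^ (i - 1) := by
          rw [← zpow_one_add τ (i - 1)]
          congr 1
          omega
        rw [h4, AlgEquiv.mul_apply]
      rwa [h2, h3] at h
    have hτu0 : τ u ≠ 0 := tau_ne_zero τ hu
    have hτud : (τ u).natDegree = u.natDegree := natDegree_tau τ hτ u
    exact hq0 (IH q.natDegree hdeg (τ u) v q hτu0 hv (by omega) (by omega) hsr2 le_rfl heq2)

private lemma phi_inj (τ : Polynomial F ≃ₐ[F] Polynomial F) (hτ : τ X = X + 1)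
    {u v : Polynomial F} (hu : u ≠ 0) (hv : v ≠ 0)
    (hsr : ∀ i : ℤ, IsCoprime u ((τ ^ i) v)) (hne : u ≠ v) :
    ∀ p, u * τ p - v * p = 0 → p = 0 := by
  intro p h
  have heq : u * τ p = v * p := sub_eq_zero.mp h
  by_contra hp0
  have hτp : τ p ≠ 0 := tau_ne_zero τ hp0
  have h1 : (u * τ p).natDegree = u.natDegree + p.natDegree := by
    rw [natDegree_mul hu hτp, natDegree_tau τ hτ]
  have h2 : (v * p).natDegree = v.natDegree + p.natDegree := natDegree_mul hv hp0
  have h3 := congrArg natDegree heq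
  have hd : u.natDegree = v.natDegree := by omega
  rcases Nat.eq_zero_or_pos u.natDegree with h0 | hpos
  · -- both constants
    have hv0 : v.natDegree = 0 := by omega
    have htop : (τ p).coeff p.natDegree = p.coeff p.natDegree := by
      have hmem : p ∈ degreeLT F (p.natDegree + 1) :=
        mem_degreeLT.mpr (lt_of_le_of_lt degree_le_natDegree
          (by exact_mod_cast Nat.lt_succ_self p.natDegree))
      have hsm := coeff_eq_zero_of_degree_lt
        (mem_degreeLT.mp (shift_sub_mem τ hτ p.natDegree hmem))
      rw [coeff_sub, sub_eq_zero] at hsm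
      exact hsm
    have hc := congrArg (fun q : Polynomial F => q.coeff p.natDegree) heq
    have hcu : u = C (u.coeff 0) := eq_C_of_natDegree_eq_zero h0
    have hcv : v = C (v.coeff 0) := eq_C_of_natDegree_eq_zero hv0
    rw [hcu, hcv, coeff_C_mul, coeff_C_mul, htop] at hc
    have hlc : p.coeff p.natDegree ≠ 0 := mt leadingCoeff_eq_zero.mp hp0
    have hab : u.coeff 0 = v.coeff 0 := mul_right_cancel₀ hlc hc
    exact hne (by rw [hcu, hcv, hab])
  · exact hp0 (descent τ hτ p.natDegree u v p hu hv hpos hd hsr le_rfl heq)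

private lemma tau_fixed (τ : Polynomial F ≃ₐ[F] Polynomial F) (hτ : τ X = X + 1)
    {p : Polynomial F} (h : τ p = p) : ∃ c, p = C c := by
  have hev : ∀ x : F, p.eval (x + 1) = p.eval x := by
    intro x
    conv_rhs => rw [← h]
    rw [tau_eq_comp τ hτ, eval_comp]
    simp
  have hn : ∀ n : ℕ, p.eval (n : F) = p.eval 0 := by
    intro n
    induction n with
    | zero => simp
    | succ k ih =>
      have h5 := hev (k : F)
      rw [← h5] at ih
      rw [← ih]
      push_cast
      ring_nf
  have hq : ∀ n : ℕ, (p - C (p.eval 0)).IsRoot (n : F) := by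
    intro n
    simp [IsRoot, hn n]
  have hz : p - C (p.eval 0) = 0 :=
    eq_zero_of_infinite_isRoot _
      (Set.infinite_of_injective_forall_mem (f := fun n : ℕ => (n : F))
        Nat.cast_injective hq)
  exact ⟨p.eval 0, by rw [← sub_eq_zero]; exact hz⟩

end Aux

/-- **Proposition (dimension bound for the standard complement).**
For shift-reduced `K = u/v`, the standard complement `W_K` of `im(φ_K)`
has dimension at most `max(deg u, deg v) − [β ≤ deg u − 1]`, where
`β = max(0, deg(v − u))`. -/
theorem standard_complement_dim_bound
    (F : Type*) [Field F] [CharZero F]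
    (τ : Polynomial F ≃ₐ[F] Polynomial F) (hτ : τ X = X + 1)
    (u v : Polynomial F) (hu : u ≠ 0) (hv : v ≠ 0) (huv : IsCoprime u v)
    (hsr : ∀ i : ℤ, IsCoprime u ((τ ^ i) v)) :
    Module.rank F
      ↥(Submodule.span F {g : Polynomial F | ∃ ℓ : ℕ, g = X ^ ℓ ∧
          ∀ p : Polynomial F, u * τ p - v * p ≠ 0 →
            (u * τ p - v * p).degree ≠ (ℓ : WithBot ℕ)})
      ≤ ((max u.natDegree v.natDegree -
          (if ((v - u).natDegree : ℤ) ≤ (u.natDegree : ℤ) - 1 then 1 else 0)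
          : ℕ) : Cardinal) := by
  classical
  set N : ℕ := max u.natDegree v.natDegree -
      (if ((v - u).natDegree : ℤ) ≤ (u.natDegree : ℤ) - 1 then 1 else 0) with hNdef
  set S : Set ℕ := {ℓ | ∀ p : Polynomial F, u * τ p - v * p ≠ 0 →
      (u * τ p - v * p).degree ≠ (ℓ : WithBot ℕ)} with hSdef
  -- the linear map Φ
  set Φ : Polynomial F →ₗ[F] Polynomial F :=
    u • τ.toLinearMap - v • LinearMap.id with hΦdef
  have hΦapp : ∀ p, Φ p = u * τ p - v * p := by
    intro p
    simp [hΦdef, smul_eq_mul]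
  -- key finset bound
  have key : ∀ t : Finset ℕ, ↑t ⊆ S → t.card ≤ N := by
    intro t ht
    set m : ℕ := t.sup id + 1 with hmdef
    have htm : ∀ ℓ ∈ t, ℓ < m := by
      intro ℓ hℓ
      have h : id ℓ ≤ t.sup id := Finset.le_sup hℓ
      simp only [id] at h
      omega
    set U : Submodule F (Polynomial F) := degreeLT F (m + 1) with hUdef
    set V : Submodule F (Polynomial F) := U.map Φ with hVdef
    haveI : FiniteDimensional F U := Module.Finite.equiv (degreeLTEquiv F (m + 1)).symm
    have hUrank : Module.finrank F U = m + 1 := by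
      rw [hUdef, (degreeLTEquiv F (m + 1)).finrank_eq, Module.finrank_pi, Fintype.card_fin]
    have hVS : ∀ ℓ ∈ t, ∀ p ∈ V, p ≠ 0 → p.degree ≠ (ℓ : WithBot ℕ) := by
      intro ℓ hℓ p hp hp0
      obtain ⟨p', _, rfl⟩ := hp
      rw [hΦapp] at hp0 ⊢
      exact ht hℓ _ hp0
    by_cases hcond : ((v - u).natDegree : ℤ) ≤ (u.natDegree : ℤ) - 1
    · -- refined case
      have hα1 : 1 ≤ u.natDegree := by omega
      have hne : v ≠ u := by
        intro h
        rw [h] at huv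
        have := natDegree_eq_zero_of_isUnit (isCoprime_self.mp huv)
        omega
      have hvu0 : v - u ≠ 0 := sub_ne_zero.mpr hne
      have hβ : (v - u).natDegree < u.natDegree := by omega
      have hdeg_eq : v.natDegree = u.natDegree := by
        have hlt : (v - u).degree < u.degree := by
          rw [degree_eq_natDegree hvu0, degree_eq_natDegree hu]
          exact_mod_cast hβ
        have h7 := degree_add_eq_left_of_degree_lt (p := u) (q := v - u) hlt
        rw [add_sub_cancel] at h7
        exact natDegree_eq_of_degree_eq h7
      have hN : N = u.natDegree - 1 := by
        rw [hNdef, if_pos hcond, hdeg_eq, max_self]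
      have hV : V ≤ degreeLT F (u.natDegree + m) := by
        rintro x ⟨p, hp, rfl⟩
        rw [hΦapp]
        have hpU : p ∈ degreeLT F (m + 1) := hp
        have h1 : u * (τ p - p) ∈ degreeLT F (u.natDegree + m) :=
          mul_mem_degreeLT u (shift_sub_mem τ hτ m hpU)
        have h2 : (u - v) * p ∈ degreeLT F (u.natDegree + m) := by
          have h3 := mul_mem_degreeLT (u - v) hpU
          have h4 : (u - v).natDegree = (v - u).natDegree := by
            rw [← natDegree_neg, neg_sub]
          refine degreeLT_mono ?_ h3
          omega
        have h5 : u * τ p - v * p = u * (τ p - p) + (u - v) * p := by ring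
        rw [h5]
        exact Submodule.add_mem _ h1 h2
      have hinj : Function.Injective Φ := by
        rw [injective_iff_map_eq_zero]
        intro p hp
        exact phi_inj τ hτ hu hv hsr (Ne.symm hne) p (by rw [← hΦapp]; exact hp)
      have hrankV : Module.finrank F V = m + 1 := by
        rw [hVdef, ← hUrank]
        exact (Submodule.equivMapOfInjective Φ hinj U).finrank_eq.symm
      have hcount := count_lemma (u.natDegree + m) V hV t
        (fun ℓ hℓ => lt_of_lt_of_le (htm ℓ hℓ) (Nat.le_add_left m _)) hVS
      omega
    · -- generic case
      have hN : N = max u.natDegree v.natDegree := by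
        rw [hNdef, if_neg hcond]
        omega
      by_cases hequ : u = v
      · -- u = v : both units
        have hunit : IsUnit u := isCoprime_self.mp (by rw [← hequ] at huv; exact huv)
        have hund : u.natDegree = 0 := natDegree_eq_zero_of_isUnit hunit
        have hV : V ≤ degreeLT F m := by
          rintro x ⟨p, hp, rfl⟩
          rw [hΦapp]
          have hpU : p ∈ degreeLT F (m + 1) := hp
          have h5 : u * τ p - v * p = u * (τ p - p) := by rw [← hequ]; ring
          rw [h5]
          have h1 := mul_mem_degreeLT u (shift_sub_mem τ hτ m hpU)
          rwa [hund, zero_add] at h1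
        -- kernel of the restriction has dimension at most 1
        haveI : FiniteDimensional F (Submodule.span F {(1 : Polynomial F)}) :=
          FiniteDimensional.span_of_finite F (Set.finite_singleton _)
        have hkerle : Module.finrank F (LinearMap.ker (Φ.domRestrict U)) ≤ 1 := by
          have hker1 : ∀ x : LinearMap.ker (Φ.domRestrict U),
              ((x : U) : Polynomial F) ∈ Submodule.span F {(1 : Polynomial F)} := by
            rintro ⟨⟨p, hpU⟩, hpker⟩
            simp only [LinearMap.mem_ker, LinearMap.domRestrict_apply] at hpker
            rw [hΦapp] at hpker
            have h5 : u * (τ p - p) = 0 := by rw [← hpker, ← hequ]; ring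
            have h6 : τ p - p = 0 := by
              rcases mul_eq_zero.mp h5 with h | h
              · exact absurd h hu
              · exact h
            obtain ⟨c, hc⟩ := tau_fixed τ hτ (sub_eq_zero.mp h6)
            rw [Submodule.mem_span_singleton]
            refine ⟨c, ?_⟩
            show c • (1 : Polynomial F) = p
            rw [hc, smul_eq_C_mul, mul_one]
          set f : LinearMap.ker (Φ.domRestrict U) →ₗ[F] Submodule.span F {(1 : Polynomial F)} :=
            { toFun := fun x => ⟨((x : U) : Polynomial F), hker1 x⟩
              map_add' := by intros; rfl
              map_smul' := by intros; rfl } with hfdef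
          have hfinj : Function.Injective f := by
            rintro ⟨⟨p, hpU⟩, hpker⟩ ⟨⟨q, hqU⟩, hqker⟩ hpq
            have h9 : p = q := congrArg Subtype.val hpq
            exact Subtype.ext (Subtype.ext h9)
          have := LinearMap.finrank_le_finrank_of_injective hfinj
          rwa [finrank_span_singleton (one_ne_zero)] at this
        have hrn := LinearMap.finrank_range_add_finrank_ker (Φ.domRestrict U)
        rw [LinearMap.range_domRestrict, hUrank] at hrn
        have hrankV : m ≤ Module.finrank F V := by
          rw [hVdef]
          omega
        have hcount := count_lemma m V hV t htm hVS
        omega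
      · -- u ≠ v
        have hV : V ≤ degreeLT F (max u.natDegree v.natDegree + m + 1) := by
          rintro x ⟨p, hp, rfl⟩
          rw [hΦapp]
          have hpU : p ∈ degreeLT F (m + 1) := hp
          have h1 : u * τ p ∈ degreeLT F (max u.natDegree v.natDegree + m + 1) := by
            have := mul_mem_degreeLT u (tau_mem_degreeLT τ hτ hpU)
            refine degreeLT_mono ?_ this
            have := le_max_left u.natDegree v.natDegree
            omega
          have h2 : v * p ∈ degreeLT F (max u.natDegree v.natDegree + m + 1) := by
            have := mul_mem_degreeLT v hpU
            refine degreeLT_mono ?_ this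
            have := le_max_right u.natDegree v.natDegree
            omega
          exact Submodule.sub_mem _ h1 h2
        have hinj : Function.Injective Φ := by
          rw [injective_iff_map_eq_zero]
          intro p hp
          exact phi_inj τ hτ hu hv hsr hequ p (by rw [← hΦapp]; exact hp)
        have hrankV : Module.finrank F V = m + 1 := by
          rw [hVdef, ← hUrank]
          exact (Submodule.equivMapOfInjective Φ hinj U).finrank_eq.symm
        have hcount := count_lemma (max u.natDegree v.natDegree + m + 1) V hV t
          (fun ℓ hℓ => lt_of_lt_of_le (htm ℓ hℓ) (by omega)) hVS
        omega
  -- conclude: S is finite of cardinality ≤ N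
  have hSfin : S.Finite := by
    by_contra hinf
    obtain ⟨t, hts, hcard⟩ := Set.Infinite.exists_subset_card_eq hinf (N + 1)
    have := key t hts
    omega
  have hcard : hSfin.toFinset.card ≤ N :=
    key hSfin.toFinset (by rw [Set.Finite.coe_toFinset])
  have hG : {g : Polynomial F | ∃ ℓ : ℕ, g = X ^ ℓ ∧
      ∀ p : Polynomial F, u * τ p - v * p ≠ 0 →
        (u * τ p - v * p).degree ≠ (ℓ : WithBot ℕ)} =
      ↑(hSfin.toFinset.image (fun ℓ => (X : Polynomial F) ^ ℓ)) := by
    rw [Finset.coe_image, Set.Finite.coe_toFinset]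
    ext g
    constructor
    · rintro ⟨ℓ, h1, h2⟩
      exact ⟨ℓ, h2, h1.symm⟩
    · rintro ⟨ℓ, h2, h1⟩
      exact ⟨ℓ, h1.symm, h2⟩
  calc Module.rank F ↥(Submodule.span F {g : Polynomial F | ∃ ℓ : ℕ, g = X ^ ℓ ∧
          ∀ p : Polynomial F, u * τ p - v * p ≠ 0 →
            (u * τ p - v * p).degree ≠ (ℓ : WithBot ℕ)})
      ≤ Cardinal.mk {g : Polynomial F | ∃ ℓ : ℕ, g = X ^ ℓ ∧
          ∀ p : Polynomial F, u * τ p - v * p ≠ 0 →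
            (u * τ p - v * p).degree ≠ (ℓ : WithBot ℕ)} := rank_span_le _
    _ = ((hSfin.toFinset.image (fun ℓ => (X : Polynomial F) ^ ℓ)).card : Cardinal) := by
        rw [hG]
        exact Cardinal.mk_coe_finset
          (s := hSfin.toFinset.image (fun ℓ => (X : Polynomial F) ^ ℓ))
    _ ≤ (N : Cardinal) := by
        have h10 := Finset.card_image_le
          (s := hSfin.toFinset) (f := fun ℓ => (X : Polynomial F) ^ ℓ)
        exact_mod_cast h10.trans hcard
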